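/- For two binary sequences s and q, the Fréchet distance d_F(s,q) = 0 if and only if s and q have the same condensed expression. Moreover, for binary sequences the Fréchet distance takes only the values 0 and 1. -/

import Mathlib

/-- `IsExpansion x x'` : `x'` is obtained from `x` by duplicating each character an
arbitrary positive number of times. -/
def IsExpansion (x x' : List ℝ) : Prop :=
  ∃ ks : List ℕ, ks.length = x.length ∧ (∀ k ∈ ks, 0 < k) ∧
    x' = (List.zipWith (fun k (a : ℝ) => List.replicate k a) ks x).flatten

/-- The discrete Fréchet distance: the minimum over all pairs of equal-length
expansions of the `ℓ∞` distance between them. -/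
noncomputable def frechet (x y : List ℝ) : ℝ :=
  sInf { c | ∃ x' y', IsExpansion x x' ∧ IsExpansion y y' ∧ x'.length = y'.length ∧
    c = (List.zipWith (fun a b => |a - b|) x' y').foldr max 0 }

open Classical in
/-- The condensed expression of a sequence: collapse each maximal run to one character. -/
noncomputable def condensed (l : List ℝ) : List ℝ := l.destutter (· ≠ ·)

namespace FrechetAux

open Classical in
lemma destutter'_head (a : ℝ) (l : List ℝ) :
    ∃ d, l.destutter' (· ≠ ·) a = a :: d := by
  induction l generalizing a with
  | nil => exact ⟨[], rfl⟩
  | cons b t ih =>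
    by_cases h : a ≠ b
    · exact ⟨_, List.destutter'_cons_pos _ h⟩
    · rw [List.destutter'_cons_neg _ h]; exact ih a

open Classical in
lemma destutter'_replicate_same (a : ℝ) (t : List ℝ) :
    ∀ k, (List.replicate k a ++ t).destutter' (· ≠ ·) a = t.destutter' (· ≠ ·) a := by
  intro k
  induction k with
  | zero => rfl
  | succ k ih =>
    rw [List.replicate_succ, List.cons_append,
      List.destutter'_cons_neg _ (not_not_intro rfl), ih]

open Classical in
lemma destutter'_replicate (a b : ℝ) (t : List ℝ) (k : ℕ) (hk : 0 < k) :
    (List.replicate k a ++ t).destutter' (· ≠ ·) b = (a :: t).destutter' (· ≠ ·) b := by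
  obtain ⟨k, rfl⟩ := Nat.exists_eq_succ_of_ne_zero hk.ne'
  rw [List.replicate_succ, List.cons_append]
  by_cases h : b ≠ a
  · rw [List.destutter'_cons_pos _ h, List.destutter'_cons_pos _ h,
      destutter'_replicate_same]
  · rw [List.destutter'_cons_neg _ h, List.destutter'_cons_neg _ h]
    push_neg at h
    subst h
    exact destutter'_replicate_same b t k

open Classical in
lemma destutter'_expansion : ∀ (x : List ℝ) (ks : List ℕ), ks.length = x.length →
    (∀ k ∈ ks, 0 < k) → ∀ b : ℝ,
    ((List.zipWith (fun k (a : ℝ) => List.replicate k a) ks x).flatten).destutter' (· ≠ ·) b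
      = x.destutter' (· ≠ ·) b
  | [], [], _, _, _ => rfl
  | [], _ :: _, hlen, _, _ => by simp at hlen
  | _ :: _, [], hlen, _, _ => by simp at hlen
  | a :: xt, k :: kst, hlen, hpos, b => by
    simp only [List.zipWith_cons_cons, List.flatten_cons]
    rw [destutter'_replicate a b _ k (hpos k (by simp))]
    have hlen' : kst.length = xt.length := by simpa using hlen
    have hpos' : ∀ j ∈ kst, 0 < j := fun j hj => hpos j (List.mem_cons_of_mem _ hj)
    by_cases h : b ≠ a
    · rw [List.destutter'_cons_pos _ h, List.destutter'_cons_pos _ h,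
        destutter'_expansion xt kst hlen' hpos' a]
    · rw [List.destutter'_cons_neg _ h, List.destutter'_cons_neg _ h,
        destutter'_expansion xt kst hlen' hpos' b]

lemma condensed_expansion {x x' : List ℝ} (h : IsExpansion x x') :
    condensed x' = condensed x := by
  obtain ⟨ks, hlen, hpos, rfl⟩ := h
  cases x with
  | nil =>
    cases ks with
    | nil => rfl
    | cons k t => simp at hlen
  | cons a xt =>
    cases ks with
    | nil => simp at hlen
    | cons k kst =>
      obtain ⟨k, rfl⟩ := Nat.exists_eq_succ_of_ne_zero (hpos k (List.mem_cons_self (a := k) (l := kst))).ne'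
      simp only [List.zipWith_cons_cons, List.flatten_cons, List.replicate_succ,
        List.cons_append]
      unfold condensed
      rw [List.destutter_cons', List.destutter_cons', destutter'_replicate_same,
        destutter'_expansion xt kst (by simpa using hlen)
          (fun j hj => hpos j (List.mem_cons_of_mem _ hj)) a]

open Classical in
lemma expansion_destutter' : ∀ (l : List ℝ) (a : ℝ), ∃ ks : List ℕ,
    ks.length = (l.destutter' (· ≠ ·) a).length ∧ (∀ k ∈ ks, 0 < k) ∧
    a :: l = (List.zipWith (fun k (x : ℝ) => List.replicate k x) ks
      (l.destutter' (· ≠ ·) a)).flatten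
  | [], a => ⟨[1], by simp, by simp, by simp⟩
  | b :: t, a => by
    by_cases h : a ≠ b
    · obtain ⟨ks, h1, h2, h3⟩ := expansion_destutter' t b
      refine ⟨1 :: ks, ?_, ?_, ?_⟩
      · rw [List.destutter'_cons_pos _ h]; simpa using h1
      · intro k hk
        rcases List.mem_cons.1 hk with rfl | hk
        · exact one_pos
        · exact h2 _ hk
      · rw [List.destutter'_cons_pos _ h]
        simp only [List.zipWith_cons_cons, List.flatten_cons, List.replicate_one,
          List.singleton_append]
        rw [← h3]
    · rw [List.destutter'_cons_neg _ h]
      push_neg at h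
      subst h
      obtain ⟨ks, h1, h2, h3⟩ := expansion_destutter' t a
      obtain ⟨d, hd⟩ := destutter'_head a t
      rw [hd] at h1 h3 ⊢
      cases ks with
      | nil => simp at h1
      | cons k ks' =>
        refine ⟨(k + 1) :: ks', by simpa using h1, ?_, ?_⟩
        · intro j hj
          rcases List.mem_cons.1 hj with rfl | hj
          · omega
          · exact h2 _ (List.mem_cons_of_mem _ hj)
        · simp only [List.zipWith_cons_cons, List.flatten_cons] at h3 ⊢
          rw [List.replicate_succ, List.cons_append, ← h3]

lemma isExpansion_condensed (l : List ℝ) : IsExpansion (condensed l) l := by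
  cases l with
  | nil => exact ⟨[], rfl, by simp, rfl⟩
  | cons a t =>
    obtain ⟨ks, h1, h2, h3⟩ := expansion_destutter' t a
    refine ⟨ks, ?_, h2, ?_⟩
    · rw [condensed, List.destutter_cons']; exact h1
    · rw [condensed, List.destutter_cons']; exact h3

lemma IsExpansion.append {u v u' v' : List ℝ} (h1 : IsExpansion u u')
    (h2 : IsExpansion v v') : IsExpansion (u ++ v) (u' ++ v') := by
  obtain ⟨ks, l1, p1, rfl⟩ := h1
  obtain ⟨js, l2, p2, rfl⟩ := h2
  refine ⟨ks ++ js, by simp [l1, l2], ?_, ?_⟩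
  · intro k hk
    rcases List.mem_append.1 hk with h | h
    exacts [p1 _ h, p2 _ h]
  · rw [List.zipWith_append l1, List.flatten_append]

lemma isExpansion_replicate_mul (a : ℝ) (m : ℕ) {n : ℕ} (hn : 0 < n) :
    IsExpansion (List.replicate m a) (List.replicate (m * n) a) :=
  ⟨List.replicate m n, by simp, fun k hk => (List.eq_of_mem_replicate hk) ▸ hn, by simp⟩

lemma common_expansion : ∀ (d : List ℝ) (ms ns : List ℕ),
    ms.length = d.length → ns.length = d.length →
    (∀ k ∈ ms, 0 < k) → (∀ k ∈ ns, 0 < k) →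
    ∃ z, IsExpansion (List.zipWith (fun k (a : ℝ) => List.replicate k a) ms d).flatten z ∧
      IsExpansion (List.zipWith (fun k (a : ℝ) => List.replicate k a) ns d).flatten z
  | [], [], [], _, _, _, _ => ⟨[], ⟨[], rfl, by simp, rfl⟩, ⟨[], rfl, by simp, rfl⟩⟩
  | [], _ :: _, _, h, _, _, _ => by simp at h
  | [], [], _ :: _, _, h, _, _ => by simp at h
  | _ :: _, [], _, h, _, _, _ => by simp at h
  | _ :: _, _ :: _, [], _, h, _, _ => by simp at h
  | a :: dt, m :: ms', n :: ns', hm, hn, pm, pn => by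
    obtain ⟨z₁, hz1, hz2⟩ := common_expansion dt ms' ns' (by simpa using hm)
      (by simpa using hn) (fun k hk => pm k (List.mem_cons_of_mem _ hk))
      (fun k hk => pn k (List.mem_cons_of_mem _ hk))
    refine ⟨List.replicate (m * n) a ++ z₁, ?_, ?_⟩
    · simp only [List.zipWith_cons_cons, List.flatten_cons]
      exact IsExpansion.append (isExpansion_replicate_mul a m (pn n (by simp))) hz1
    · simp only [List.zipWith_cons_cons, List.flatten_cons]
      rw [mul_comm m n]
      exact IsExpansion.append (isExpansion_replicate_mul a n (pm m (by simp))) hz2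

lemma exists_common_of_condensed_eq {s q : List ℝ} (h : condensed s = condensed q) :
    ∃ z, IsExpansion s z ∧ IsExpansion q z := by
  have h1 := isExpansion_condensed s
  have h2 := isExpansion_condensed q
  rw [h] at h1
  obtain ⟨ms, lm, pm, hs⟩ := h1
  obtain ⟨ns, ln, pn, hq⟩ := h2
  obtain ⟨z, hz1, hz2⟩ := common_expansion (condensed q) ms ns lm ln pm pn
  exact ⟨z, hs ▸ hz1, hq ▸ hz2⟩

lemma mem_of_expansion : ∀ (x : List ℝ) (ks : List ℕ) (c : ℝ),
    c ∈ (List.zipWith (fun k (a : ℝ) => List.replicate k a) ks x).flatten → c ∈ x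
  | a :: xt, k :: kst, c, hc => by
    simp only [List.zipWith_cons_cons, List.flatten_cons, List.mem_append] at hc
    rcases hc with h | h
    · simp [List.eq_of_mem_replicate h]
    · exact List.mem_cons_of_mem _ (mem_of_expansion xt kst c h)
  | [], _, c, hc => by simp at hc
  | _ :: _, [], c, hc => by simp at hc

lemma mem_of_isExpansion {x x' : List ℝ} (h : IsExpansion x x') {c : ℝ} (hc : c ∈ x') :
    c ∈ x := by
  obtain ⟨ks, _, _, rfl⟩ := h
  exact mem_of_expansion x ks c hc

lemma exists_expansion_length : ∀ (x : List ℝ), x ≠ [] → ∀ n : ℕ,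
    ∃ x', IsExpansion x x' ∧ x'.length = x.length + n
  | [], h, _ => absurd rfl h
  | [a], _, n =>
    ⟨List.replicate (n + 1) a, ⟨[n + 1], rfl, by simp, by simp⟩, by simp [Nat.add_comm]⟩
  | a :: b :: t, _, n => by
    obtain ⟨t', ht, hl⟩ := exists_expansion_length (b :: t) (List.cons_ne_nil b t) n
    refine ⟨a :: t', ?_, by simp [hl]; omega⟩
    have : IsExpansion ([a] ++ (b :: t)) ([a] ++ t') := by
      refine IsExpansion.append ⟨[1], rfl, by simp, by simp⟩ ht
    simpa using this

lemma foldr_max_nonneg : ∀ l : List ℝ, 0 ≤ l.foldr max 0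
  | [] => le_refl 0
  | a :: t => le_trans (foldr_max_nonneg t) (le_max_right a _)

lemma foldr_max_binary : ∀ l : List ℝ, (∀ c ∈ l, c = 0 ∨ c = 1) →
    l.foldr max 0 = 0 ∨ l.foldr max 0 = 1
  | [], _ => Or.inl rfl
  | a :: t, h => by
    have ha := h a (List.mem_cons_self (a := a) (l := t))
    have ht := foldr_max_binary t (fun c hc => h c (List.mem_cons_of_mem _ hc))
    show max a (t.foldr max 0) = 0 ∨ max a (t.foldr max 0) = 1
    rcases ha with rfl | rfl <;> rcases ht with h' | h' <;> rw [h'] <;> norm_num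

lemma foldr_max_eq_zero : ∀ (l : List ℝ), (∀ c ∈ l, 0 ≤ c) → l.foldr max 0 = 0 →
    ∀ c ∈ l, c = 0
  | [], _, _, c, hc => by simp at hc
  | a :: t, hnn, h, c, hc => by
    have h' : max a (t.foldr max 0) = 0 := h
    have ha : a = 0 :=
      le_antisymm (by rw [← h']; exact le_max_left a _) (hnn a (List.mem_cons_self (a := a) (l := t)))
    have ht : t.foldr max 0 = 0 :=
      le_antisymm (le_of_le_of_eq (le_max_right a _) h') (foldr_max_nonneg t)
    rcases List.mem_cons.1 hc with rfl | hc
    · exact ha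
    · exact foldr_max_eq_zero t (fun c hc => hnn c (List.mem_cons_of_mem _ hc)) ht c hc

lemma foldr_max_all_zero : ∀ l : List ℝ, (∀ c ∈ l, c = 0) → l.foldr max 0 = 0
  | [], _ => rfl
  | a :: t, h => by
    show max a (t.foldr max 0) = 0
    rw [h a (List.mem_cons_self (a := a) (l := t)),
      foldr_max_all_zero t (fun c hc => h c (List.mem_cons_of_mem _ hc))]
    simp

lemma mem_zipWith_abs : ∀ (x y : List ℝ) (c : ℝ),
    c ∈ List.zipWith (fun a b => |a - b|) x y → ∃ a b, a ∈ x ∧ b ∈ y ∧ c = |a - b|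
  | a :: xt, b :: yt, c, hc => by
    rcases List.mem_cons.1 hc with rfl | hc
    · exact ⟨a, b, List.mem_cons_self (a := a) (l := xt), List.mem_cons_self (a := b) (l := yt), rfl⟩
    · obtain ⟨a', b', h1, h2, h3⟩ := mem_zipWith_abs xt yt c hc
      exact ⟨a', b', List.mem_cons_of_mem _ h1, List.mem_cons_of_mem _ h2, h3⟩
  | [], _, c, hc => by simp at hc
  | _ :: _, [], c, hc => by simp at hc

lemma eq_of_zip_abs_zero : ∀ (x y : List ℝ), x.length = y.length →
    (∀ c ∈ List.zipWith (fun a b => |a - b|) x y, c = 0) → x = y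
  | [], [], _, _ => rfl
  | a :: xt, b :: yt, hl, h => by
    have h1 : |a - b| = 0 := h _ List.mem_cons_self
    have hab : a = b := by
      have := abs_eq_zero.mp h1; linarith
    rw [hab, eq_of_zip_abs_zero xt yt (by simpa using hl)
      (fun c hc => h c (List.mem_cons_of_mem _ hc))]
  | [], _ :: _, hl, _ => by simp at hl
  | _ :: _, [], hl, _ => by simp at hl

end FrechetAux

open FrechetAux in
/-- For nonempty binary sequences `s` and `q`, the Fréchet distance is `0`
iff `s` and `q` have the same condensed expression; moreover on binary sequences it only
takes the values `0` and `1`. -/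
theorem frechet_binary_eq_zero_iff_condensed_eq
    (s q : List ℝ) (hs : s ≠ []) (hq : q ≠ [])
    (hsbin : ∀ c ∈ s, c = 0 ∨ c = 1) (hqbin : ∀ c ∈ q, c = 0 ∨ c = 1) :
    (frechet s q = 0 ↔ condensed s = condensed q) ∧
      (frechet s q = 0 ∨ frechet s q = 1) := by
  set S := { c | ∃ x' y', IsExpansion s x' ∧ IsExpansion q y' ∧ x'.length = y'.length ∧
    c = (List.zipWith (fun a b => |a - b|) x' y').foldr max 0 } with hS
  have hfr : frechet s q = sInf S := rfl
  -- every element of S is 0 or 1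
  have hbin : ∀ c ∈ S, c = 0 ∨ c = 1 := by
    rintro c ⟨x', y', hx, hy, _, rfl⟩
    apply foldr_max_binary
    intro e he
    obtain ⟨a, b, ha, hb, rfl⟩ := mem_zipWith_abs x' y' e he
    have ha' := hsbin a (mem_of_isExpansion hx ha)
    have hb' := hqbin b (mem_of_isExpansion hy hb)
    rcases ha' with rfl | rfl <;> rcases hb' with rfl | rfl <;> norm_num
  -- if 0 ∈ values, condensed equal
  have hzero : ∀ c ∈ S, c = 0 → condensed s = condensed q := by
    rintro c ⟨x', y', hx, hy, hlen, rfl⟩ h0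
    have hall : ∀ e ∈ List.zipWith (fun a b => |a - b|) x' y', e = 0 := by
      apply foldr_max_eq_zero _ _ h0
      intro e he
      obtain ⟨a, b, _, _, rfl⟩ := mem_zipWith_abs x' y' e he
      exact abs_nonneg _
    have hxy : x' = y' := eq_of_zip_abs_zero x' y' hlen hall
    calc condensed s = condensed x' := (condensed_expansion hx).symm
      _ = condensed y' := by rw [hxy]
      _ = condensed q := condensed_expansion hy
  -- S is nonempty
  have hne : S.Nonempty := by
    obtain ⟨x', hx, hxl⟩ := exists_expansion_length s hs q.length
    obtain ⟨y', hy, hyl⟩ := exists_expansion_length q hq s.length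
    exact ⟨_, x', y', hx, hy, by omega, rfl⟩
  have hbdd : BddBelow S := by
    refine ⟨0, ?_⟩
    rintro c ⟨x', y', _, _, _, rfl⟩
    exact foldr_max_nonneg _
  by_cases hcond : condensed s = condensed q
  · -- 0 ∈ S
    obtain ⟨z, hz1, hz2⟩ := exists_common_of_condensed_eq hcond
    have h0 : (0 : ℝ) ∈ S := by
      refine ⟨z, z, hz1, hz2, rfl, ?_⟩
      rw [List.zipWith_self]
      exact (foldr_max_all_zero _ (by simp)).symm
    have : frechet s q = 0 := by
      rw [hfr]
      refine le_antisymm (csInf_le hbdd h0) (le_csInf hne ?_)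
      rintro c ⟨x', y', _, _, _, rfl⟩
      exact foldr_max_nonneg _
    exact ⟨⟨fun _ => hcond, fun _ => this⟩, Or.inl this⟩
  · -- every element of S is 1
    have hall1 : ∀ c ∈ S, c = 1 := by
      intro c hc
      rcases hbin c hc with h0 | h1
      · exact absurd (hzero c hc h0) hcond
      · exact h1
    obtain ⟨c, hc⟩ := hne
    have h1 : (1 : ℝ) ∈ S := hall1 c hc ▸ hc
    have : frechet s q = 1 := by
      rw [hfr]
      refine le_antisymm (csInf_le hbdd h1) (le_csInf ⟨c, hc⟩ ?_)
      intro e he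
      rw [hall1 e he]
    refine ⟨⟨fun h => ?_, fun h => absurd h hcond⟩, Or.inr this⟩
    rw [this] at h
    norm_num at h
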